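/- Let G be a finite group acting linearly on a finite F_q-vector space V, let D(V ⋊ G) be the subgroup of the affine group V ⋊ G generated by all derangements (on V), and let A(G) be the subgroup of G generated by all elements of G having eigenvalue 1 on V. Then the index |V ⋊ G : D(V ⋊ G)| equals |G : A(G)|. -/

import Mathlib

open Finset

/-- The homomorphism `G →* MulAut (Multiplicative V)` induced by a linear action of `G`
on `V` by linear automorphisms. -/
def reprToMulAut {F G V : Type*} [Field F] [Group G] [AddCommGroup V] [Module F V]
    (ρ : G →* (V ≃ₗ[F] V)) : G →* MulAut (Multiplicative V) where
  toFun g := AddEquiv.toMultiplicative (ρ g).toAddEquiv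
  map_one' := by ext v; simp [AddEquiv.toMultiplicative]
  map_mul' g h := by ext v; simp [AddEquiv.toMultiplicative]

/-- `|V ⋊ G : D(V ⋊ G)| = |G : A(G)|`, where `D(V ⋊ G)` is the subgroup
of the affine group `V ⋊ G` generated by all derangements on `V`, and `A(G)` is the
subgroup of `G` generated by all elements with eigenvalue 1 on `V`. -/
theorem stmt_3 (F : Type*) [Field F] [Fintype F] (G : Type*) [Group G] [Fintype G]
    (V : Type*) [AddCommGroup V] [Module F V] [Fintype V]
    (ρ : G →* (V ≃ₗ[F] V)) :
    (Subgroup.closure {x : SemidirectProduct (Multiplicative V) G (reprToMulAut ρ) |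
        ∀ v : V, ρ x.right v + x.left.toAdd ≠ v}).index =
      (Subgroup.closure {g : G | ∃ v : V, v ≠ 0 ∧ ρ g v = v}).index := by
  classical
  set W := SemidirectProduct (Multiplicative V) G (reprToMulAut ρ) with hW
  set φ := (SemidirectProduct.rightHom : W →* G) with hφ
  set S := {x : W | ∀ v : V, ρ x.right v + x.left.toAdd ≠ v} with hS
  set T := {g : G | ∃ v : V, v ≠ 0 ∧ ρ g v = v} with hT
  have key : Subgroup.closure S = (Subgroup.closure T).comap φ := by
    rcases subsingleton_or_nontrivial V with hV | hV
    · have hSe : S = ∅ := by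
        ext x
        simp only [hS, Set.mem_setOf_eq, Set.mem_empty_iff_false, iff_false, not_forall,
          not_ne_iff]
        exact ⟨0, Subsingleton.elim _ _⟩
      have hTe : T = ∅ := by
        ext g
        simp only [hT, Set.mem_setOf_eq, Set.mem_empty_iff_false, iff_false]
        rintro ⟨v, hv, -⟩
        exact hv (Subsingleton.elim _ _)
      rw [hSe, hTe, Subgroup.closure_empty, Subgroup.closure_empty]
      have : Subsingleton (Multiplicative V) := ‹Subsingleton V›
      ext x
      simp only [Subgroup.mem_comap, Subgroup.mem_bot]
      constructor
      · rintro rfl; simp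
      · intro hx
        ext
        · exact Subsingleton.elim _ _
        · exact hx
    · apply le_antisymm
      · rw [Subgroup.closure_le]
        intro x hx
        simp only [SetLike.mem_coe, Subgroup.mem_comap]
        apply Subgroup.subset_closure
        by_contra hgT
        have hg : ∀ v : V, v ≠ 0 → ρ x.right v ≠ v := by
          intro v hv hfix
          exact hgT ⟨v, hv, hfix⟩
        have hinj : Function.Injective (fun v : V => v - ρ x.right v) := by
          intro a b hab
          by_contra hne
          refine hg (a - b) (sub_ne_zero.mpr hne) ?_
          have : a - ρ x.right a = b - ρ x.right b := hab
          rw [map_sub]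
          have h2 : ρ x.right a - ρ x.right b = a - b := by
            have := sub_eq_sub_iff_sub_eq_sub.mp this
            linear_combination (norm := abel) -this
          exact h2
        obtain ⟨v, hv⟩ := Finite.injective_iff_surjective.mp hinj x.left.toAdd
        exact hx v (by simp only at hv; rw [← hv]; abel)
      · intro x hx
        rw [Subgroup.mem_comap] at hx
        have hinl : ∀ w : Multiplicative V,
            SemidirectProduct.inl w ∈ Subgroup.closure S := by
          intro w
          by_cases hw : w = 1
          · rw [hw, map_one]; exact one_mem _
          · apply Subgroup.subset_closure
            intro v
            simp only [hS, SemidirectProduct.left_inl, SemidirectProduct.right_inl, map_one,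
              LinearEquiv.coe_one, id_eq, Set.mem_setOf_eq]
            intro hc
            exact hw (toAdd_eq_zero.mp (by simpa using hc))
        have hinr : ∀ g ∈ T, SemidirectProduct.inr g ∈ Subgroup.closure S := by
          intro g hg
          obtain ⟨v₀, hv₀, hfix⟩ := hg
          have hni : ¬ Function.Injective (fun v : V => v - ρ g v) := by
            intro hinj
            apply hv₀
            have : v₀ - ρ g v₀ = (0 : V) - ρ g 0 := by
              simp [hfix]
            simpa using hinj this
          have hns : ¬ Function.Surjective (fun v : V => v - ρ g v) := fun h =>
            hni (Finite.injective_iff_surjective.mpr h)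
          rw [Function.Surjective] at hns
          push_neg at hns
          obtain ⟨w, hwr⟩ := hns
          have hmem : (⟨Multiplicative.ofAdd w, g⟩ : W) ∈ Subgroup.closure S := by
            apply Subgroup.subset_closure
            intro v hc
            have hc' : ρ g v + w = v := hc
            have : ρ g v = v - w := eq_sub_of_add_eq hc'
            exact hwr v (by rw [this]; abel)
          have hdec : (⟨Multiplicative.ofAdd w, g⟩ : W) =
              SemidirectProduct.inl (Multiplicative.ofAdd w) * SemidirectProduct.inr g := by
            ext <;> simp
          have : SemidirectProduct.inr g =
              (SemidirectProduct.inl (Multiplicative.ofAdd w))⁻¹ *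
                (⟨Multiplicative.ofAdd w, g⟩ : W) := by
            rw [hdec, inv_mul_cancel_left]
          rw [this]
          exact mul_mem (inv_mem (hinl _)) hmem
        have hxr : SemidirectProduct.inr x.right ∈ Subgroup.closure S := by
          have hle : Subgroup.closure T ≤
              (Subgroup.closure S).comap (SemidirectProduct.inr :
                G →* W) := by
            rw [Subgroup.closure_le]
            intro g hg
            exact hinr g hg
          exact hle hx
        rw [← SemidirectProduct.inl_left_mul_inr_right x]
        exact mul_mem (hinl x.left) hxr
  rw [key]
  exact Subgroup.index_comap_of_surjective _ SemidirectProduct.rightHom_surjective
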